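/- Let m be odd, n = 2m, x̄ = x^{2^m}. Let θ₁ ∈ F_{2^m} be nonzero and θ₂ ∈ F_{2^n} with Tr_{F_{2^m}/F_2}(θ₂θ̄₂/θ₁²) = 0. Then for every nonzero a ∈ F_{2^n}, the element M(a) := θ₁·a·ā + θ̄₂·ā² + θ₂·a² is nonzero. -/

import Mathlib

private lemma sum_sq {F : Type*} [CommRing F] (htwo : (2:F) = 0) (c : F) (k : ℕ) :
    (∑ i ∈ Finset.range k, c ^ 2 ^ i) ^ 2 = ∑ i ∈ Finset.range k, c ^ 2 ^ (i + 1) := by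
  have hsq : ∀ y z : F, (y + z) ^ 2 = y ^ 2 + z ^ 2 := by
    intro y z; linear_combination y * z * htwo
  induction k with
  | zero => simp
  | succ k ih =>
      rw [Finset.sum_range_succ, hsq, ih, Finset.sum_range_succ, ← pow_mul, ← pow_succ]

private lemma frob_iter {F : Type*} [CommRing F] (htwo : (2:F) = 0) (x : F) (k : ℕ) :
    x ^ 2 ^ k = x + ∑ i ∈ Finset.range k, (x ^ 2 + x) ^ 2 ^ i := by
  have hsq : ∀ y z : F, (y + z) ^ 2 = y ^ 2 + z ^ 2 := by
    intro y z; linear_combination y * z * htwo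
  induction k with
  | zero => simp
  | succ k ih =>
      calc x ^ 2 ^ (k + 1) = (x ^ 2 ^ k) ^ 2 := by rw [← pow_mul, pow_succ]
        _ = x ^ 2 + ∑ i ∈ Finset.range k, (x ^ 2 + x) ^ 2 ^ (i + 1) := by
              rw [ih, hsq, sum_sq htwo]
        _ = x + ∑ i ∈ Finset.range (k + 1), (x ^ 2 + x) ^ 2 ^ i := by
              rw [Finset.sum_range_succ']
              linear_combination (-x) * htwo

/-- Lemma 5 (1): if `θ₁ ∈ F_{2^m}*` and `Tr_{F_{2^m}/F_2}(θ₂θ̄₂/θ₁²) = 0`, then for every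
nonzero `a ∈ F_{2^n}` (`n = 2m`, `m` odd), `M(a) = θ₁·a·ā + θ̄₂·ā² + θ₂·a² ≠ 0`. -/
theorem stmt_11 (m : ℕ) (hm : Odd m) (hm0 : 0 < m) (θ₁ θ₂ : GaloisField 2 (2 * m))
    (hθ₁m : θ₁ ^ 2 ^ m = θ₁) (hθ₁ : θ₁ ≠ 0)
    (htr : ∑ i ∈ Finset.range m, (θ₂ * θ₂ ^ 2 ^ m / θ₁ ^ 2) ^ 2 ^ i = 0) :
    ∀ a : GaloisField 2 (2 * m), a ≠ 0 →
      θ₁ * a * a ^ 2 ^ m + θ₂ ^ 2 ^ m * (a ^ 2 ^ m) ^ 2 + θ₂ * a ^ 2 ≠ 0 := by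
  haveI : Fact (Nat.Prime 2) := ⟨Nat.prime_two⟩
  intro a ha h0
  have htwo : (2 : GaloisField 2 (2 * m)) = 0 := by
    have := CharP.cast_eq_zero (GaloisField 2 (2 * m)) 2
    simpa using this
  have hpow : ∀ x : GaloisField 2 (2 * m), (x ^ 2 ^ m) ^ 2 ^ m = x := by
    intro x
    haveI : Fintype (GaloisField 2 (2 * m)) := Fintype.ofFinite _
    have hcard : Fintype.card (GaloisField 2 (2 * m)) = 2 ^ (2 * m) := by
      rw [← Nat.card_eq_fintype_card]
      exact GaloisField.card 2 (2 * m) (by omega)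
    have h1 : x ^ 2 ^ (2 * m) = x := by
      rw [← hcard]
      exact FiniteField.pow_card x
    rw [← pow_mul, ← pow_add, ← two_mul]
    exact h1
  set b := a ^ 2 ^ m with hbdef
  have hb : b ≠ 0 := pow_ne_zero _ ha
  have habar : b ^ 2 ^ m = a := hpow a
  have hθ₂bar : (θ₂ ^ 2 ^ m) ^ 2 ^ m = θ₂ := hpow θ₂
  set v : GaloisField 2 (2 * m) := θ₂ ^ 2 ^ m * b / (θ₁ * a) with hvdef
  have hv : v ^ 2 + v = θ₂ * θ₂ ^ 2 ^ m / θ₁ ^ 2 := by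
    rw [hvdef]
    field_simp
    ring_nf
    linear_combination θ₂ ^ 2 ^ m * h0 - θ₂ * θ₂ ^ 2 ^ m * a ^ 2 * htwo
  have hvfrob : v ^ 2 ^ m = v := by
    rw [frob_iter htwo v m]
    simp only [hv]
    rw [htr, add_zero]
  have hv2 : v ^ 2 ^ m = θ₂ * a / (θ₁ * b) := by
    rw [hvdef, div_pow, mul_pow, mul_pow, habar, hθ₂bar, hθ₁m]
  have key : θ₂ * a ^ 2 = θ₂ ^ 2 ^ m * b ^ 2 := by
    have h := hv2.symm.trans hvfrob
    rw [hvdef, div_eq_div_iff (mul_ne_zero hθ₁ hb) (mul_ne_zero hθ₁ ha)] at h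
    have h' : θ₁ * (θ₂ * a ^ 2) = θ₁ * (θ₂ ^ 2 ^ m * b ^ 2) := by linear_combination h
    exact mul_left_cancel₀ hθ₁ h'
  have hzero : θ₁ * a * b = 0 := by
    linear_combination h0 - key - θ₂ ^ 2 ^ m * b ^ 2 * htwo
  exact (mul_ne_zero (mul_ne_zero hθ₁ ha) hb) hzero
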